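/- Let χ* be a primitive Dirichlet character modulo c*, let m be a positive integer, and let s ∈ ℂ with Re(s) > 1. Then the series I(s, χ*, c*, m) = ∑_{ℓ≥1} g(χ*, ℓc*, m) ℓ^{−s} converges absolutely, and τ(χ*) · σ_{s−1}(m, conj(χ*)) = m^{s−1} · I(s, χ*, c*, m) · L(s, χ*), where L(s, χ*) = ∑_{n≥1} χ*(n) n^{−s}. -/

import Mathlib

open scoped BigOperators

noncomputable def eC (x : ℝ) : ℂ := Complex.exp (2 * Real.pi * Complex.I * x)

/-- Gauss sum of the character modulo `c` induced by `χs` (defined modulo `cs`, with `cs ∣ c`). -/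
noncomputable def gSum {cs : ℕ} (χs : DirichletCharacter ℂ cs) (c : ℕ) (m : ℤ) : ℂ :=
  ∑ u ∈ (Finset.range c).filter fun u => Nat.Coprime u c,
    χs ((u : ℕ) : ZMod cs) * eC ((m : ℝ) * (u : ℝ) / (c : ℝ))

open scoped ArithmeticFunction LSeries.notation
open Finset

lemma eC_add (x y : ℝ) : eC (x + y) = eC x * eC y := by
  rw [eC, eC, eC, ← Complex.exp_add]
  congr 1
  push_cast
  ring

lemma eC_int (n : ℤ) : eC n = 1 := by
  rw [eC]
  rw [show (2 * Real.pi * Complex.I * (n:ℝ) : ℂ) = (n : ℂ) * (2 * Real.pi * Complex.I) by push_cast; ring]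
  exact Complex.exp_int_mul_two_pi_mul_I n

lemma eC_pow (x : ℝ) (j : ℕ) : eC x ^ j = eC (j * x) := by
  rw [eC, eC, ← Complex.exp_nat_mul]
  congr 1
  push_cast
  ring

lemma geom_eC {k : ℕ} (hk : 0 < k) (m : ℕ) :
    ∑ j ∈ Finset.range k, eC (m * j / k) = if k ∣ m then (k : ℂ) else 0 := by
  have hz : ∀ j ∈ Finset.range k, eC (m * j / k) = eC (m / k) ^ j := by
    intro j _
    rw [eC_pow]
    congr 1
    push_cast
    ring
  rw [Finset.sum_congr rfl hz]
  by_cases hd : k ∣ m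
  · obtain ⟨c, rfl⟩ := hd
    have h1 : ((k * c : ℕ) : ℝ) / k = (c : ℕ) := by
      push_cast
      field_simp
    rw [h1]
    have : eC ((c:ℕ):ℝ) = 1 := by exact_mod_cast eC_int (c : ℤ)
    simp [this]
  · have hzk : eC ((m : ℝ) / k) ^ k = 1 := by
      rw [eC_pow]
      have : (k : ℝ) * ((m : ℝ) / k) = (m : ℤ) := by
        field_simp
        simp
      rw [this, eC_int]
    have hz1 : eC ((m : ℝ) / k) ≠ 1 := by
      intro h
      rw [eC, Complex.exp_eq_one_iff] at h
      obtain ⟨n, hn⟩ := h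
      have h2 : (2 * Real.pi * Complex.I : ℂ) ≠ 0 := by
        simp [Real.pi_ne_zero, Complex.I_ne_zero]
      have : (((m : ℝ) / k : ℝ) : ℂ) = (n : ℂ) := by
        apply mul_left_cancel₀ h2
        rw [hn]; ring
      have hre : (m : ℝ) / k = (n : ℝ) := by
        exact_mod_cast congrArg Complex.re this
      have : (m : ℝ) = (n : ℝ) * k := by
        field_simp at hre
        linarith [hre]
      have : (m : ℤ) = n * k := by exact_mod_cast this
      exact hd (Int.ofNat_dvd.mp ⟨n, by linarith⟩)
    rw [if_neg hd, geom_sum_eq hz1, hzk]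
    simp

lemma sum_moebius_divisors (n : ℕ) :
    ∑ t ∈ n.divisors, (ArithmeticFunction.moebius t : ℂ) = if n = 1 then 1 else 0 := by
  have h := congrArg (fun f : ArithmeticFunction ℤ => f n) ArithmeticFunction.moebius_mul_coe_zeta
  simp only [ArithmeticFunction.coe_mul_zeta_apply, ArithmeticFunction.one_apply] at h
  have h2 := congrArg (fun z : ℤ => (z : ℂ)) h
  push_cast at h2
  rw [h2]


section
variable {cs : ℕ} [NeZero cs] (χs : DirichletCharacter ℂ cs)

lemma stdAddChar_eq_eC (j : ℕ) : ZMod.stdAddChar ((j : ℕ) : ZMod cs) = eC ((j : ℝ) / cs) := by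
  have := ZMod.stdAddChar_coe (N := cs) (j : ℤ)
  rw [eC]
  push_cast at this ⊢
  rw [this]
  congr 1
  ring

lemma sum_range_eC_eq_gaussSum (n : ℕ) :
    ∑ a ∈ Finset.range cs, χs ((a : ℕ) : ZMod cs) * eC ((n : ℝ) * a / cs)
      = gaussSum χs (ZMod.stdAddChar.mulShift ((n : ℕ) : ZMod cs)) := by
  rw [gaussSum]
  refine Finset.sum_nbij' (fun i => ((i : ℕ) : ZMod cs)) (fun a => a.val) ?_ ?_ ?_ ?_ ?_
  · intro i _; exact Finset.mem_univ _
  · intro a _; exact Finset.mem_range.mpr (ZMod.val_lt a)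
  · intro i hi
    simp [ZMod.val_cast_of_lt (Finset.mem_range.mp hi)]
  · intro a _
    simp [ZMod.natCast_val, ZMod.cast_id]
  · intro i _
    rw [AddChar.mulShift_apply]
    rw [show ((n : ZMod cs) * (i : ZMod cs)) = ((n * i : ℕ) : ZMod cs) by push_cast; ring]
    rw [stdAddChar_eq_eC]
    congr 2
    push_cast
    ring

lemma sum_range_eC_eval' (hprim : χs.IsPrimitive) (n : ℕ) :
    ∑ a ∈ Finset.range cs, χs ((a : ℕ) : ZMod cs) * eC ((n : ℝ) * a / cs)
      = (starRingEnd ℂ) (χs ((n : ℕ) : ZMod cs)) * gaussSum χs ZMod.stdAddChar := by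
  rw [sum_range_eC_eq_gaussSum, gaussSum_mulShift_of_isPrimitive _ hprim]
  congr 1
  exact (MulChar.star_apply' χs _).symm


lemma Heval (hprim : χs.IsPrimitive) {k : ℕ} (hk : 0 < k) (m : ℕ) :
    ∑ v ∈ Finset.range (k * cs), χs ((v : ℕ) : ZMod cs) * eC ((m : ℝ) * v / ((k * cs : ℕ) : ℝ))
      = if k ∣ m then
          (k : ℂ) * ((starRingEnd ℂ) (χs ((m / k : ℕ) : ZMod cs)) * gaussSum χs ZMod.stdAddChar)
        else 0 := by
  have hcs : 0 < cs := Nat.pos_of_ne_zero (NeZero.ne cs)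
  have hkcs : (0:ℝ) < (k:ℝ) * cs := by positivity
  -- reindex
  have hre : ∑ v ∈ Finset.range (k * cs), χs ((v : ℕ) : ZMod cs) * eC ((m : ℝ) * v / ((k * cs : ℕ) : ℝ))
      = ∑ p ∈ (Finset.range cs) ×ˢ (Finset.range k),
          χs ((p.1 : ℕ) : ZMod cs) * eC ((m : ℝ) * p.1 / ((k * cs : ℕ) : ℝ)) * eC ((m : ℝ) * p.2 / k) := by
    refine Finset.sum_nbij' (fun v => (v % cs, v / cs)) (fun p => p.1 + cs * p.2) ?_ ?_ ?_ ?_ ?_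
    · intro v hv
      rw [Finset.mem_range] at hv
      refine Finset.mem_product.mpr ⟨Finset.mem_range.mpr (Nat.mod_lt _ hcs), Finset.mem_range.mpr ?_⟩
      exact Nat.div_lt_of_lt_mul (by rw [Nat.mul_comm]; exact hv)
    · intro p hp
      rw [Finset.mem_product, Finset.mem_range, Finset.mem_range] at hp
      refine Finset.mem_range.mpr ?_
      calc p.1 + cs * p.2 < cs + cs * p.2 := by omega
        _ ≤ cs * k := by nlinarith [hp.2]
        _ = k * cs := by ring
    · intro v _
      show v % cs + cs * (v / cs) = v
      exact Nat.mod_add_div v cs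
    · intro p hp
      rw [Finset.mem_product, Finset.mem_range, Finset.mem_range] at hp
      have h1 : (p.1 + cs * p.2) % cs = p.1 := by
        rw [Nat.add_mul_mod_self_left, Nat.mod_eq_of_lt hp.1]
      have h2 : (p.1 + cs * p.2) / cs = p.2 := by
        rw [Nat.add_mul_div_left _ _ hcs, Nat.div_eq_of_lt hp.1, zero_add]
      exact Prod.ext h1 h2
    · intro v hv
      rw [Finset.mem_range] at hv
      set a := v % cs with ha
      set j := v / cs with hj
      have hv' : v = a + cs * j := (Nat.mod_add_div v cs).symm
      have hcast : ((v : ℕ) : ZMod cs) = ((a : ℕ) : ZMod cs) := by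
        rw [hv']; push_cast; simp
      have heq : ((m : ℝ) * v / ((k * cs : ℕ) : ℝ)) = (m : ℝ) * a / ((k * cs : ℕ) : ℝ) + (m : ℝ) * j / k := by
        rw [hv']
        push_cast
        field_simp
      rw [hcast, heq, eC_add, mul_assoc]
  rw [hre, Finset.sum_product]
  simp_rw [← Finset.mul_sum]
  rw [show (∑ j ∈ Finset.range k, eC ((m:ℝ) * j / k)) = if k ∣ m then (k : ℂ) else 0 from geom_eC hk m]
  by_cases hd : k ∣ m
  · rw [if_pos hd, if_pos hd]
    obtain ⟨c, rfl⟩ := hd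
    have harg : ∀ a:ℕ, ((k*c : ℕ):ℝ) * a / ((k*cs : ℕ):ℝ) = (c:ℝ) * a / cs := by
      intro a
      push_cast
      field_simp
    simp_rw [harg]
    rw [← Finset.sum_mul, sum_range_eC_eval' χs hprim c, Nat.mul_div_cancel_left c hk]
    ring
  · rw [if_neg hd, if_neg hd]
    simp

lemma gSum_expand (m : ℕ) {ℓ : ℕ} (hℓ : 0 < ℓ) :
    (∑ u ∈ (Finset.range (ℓ * cs)).filter (fun u => Nat.Coprime u (ℓ * cs)),
        χs ((u : ℕ) : ZMod cs) * eC ((m : ℝ) * u / ((ℓ * cs : ℕ) : ℝ)))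
      = ∑ t ∈ ℓ.divisors, (ArithmeticFunction.moebius t : ℂ) * χs ((t : ℕ) : ZMod cs) *
          ∑ v ∈ Finset.range ((ℓ / t) * cs),
            χs ((v : ℕ) : ZMod cs) * eC ((m : ℝ) * v / (((ℓ / t) * cs : ℕ) : ℝ)) := by
  have hcs : 0 < cs := Nat.pos_of_ne_zero (NeZero.ne cs)
  set c := ℓ * cs with hc
  have hcpos : 0 < c := Nat.mul_pos hℓ hcs
  set f : ℕ → ℂ := fun u => χs ((u : ℕ) : ZMod cs) * eC ((m : ℝ) * u / (c : ℝ)) with hf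
  have stepA : (∑ u ∈ (Finset.range c).filter (fun u => Nat.Coprime u c), f u)
      = ∑ u ∈ Finset.range c, (if Nat.Coprime u ℓ then (1:ℂ) else 0) * f u := by
    rw [Finset.sum_filter]
    refine Finset.sum_congr rfl fun u _ => ?_
    by_cases h1 : Nat.Coprime u ℓ
    · by_cases h2 : Nat.Coprime u cs
      · rw [if_pos (Nat.Coprime.mul_right h1 h2), if_pos h1, one_mul]
      · have hchi : χs ((u : ℕ) : ZMod cs) = 0 := by
          apply MulChar.map_nonunit
          rw [ZMod.isUnit_iff_coprime]
          exact h2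
        have hfu : f u = 0 := by rw [hf]; simp [hchi]
        rw [hfu, mul_zero]
        split <;> rfl
    · rw [if_neg h1, zero_mul,
        if_neg (fun hco => h1 (Nat.Coprime.coprime_dvd_right ⟨cs, rfl⟩ hco))]
  have stepB : ∀ u, (if Nat.Coprime u ℓ then (1:ℂ) else 0)
      = ∑ t ∈ ℓ.divisors.filter (· ∣ u), (ArithmeticFunction.moebius t : ℂ) := by
    intro u
    have hset : ℓ.divisors.filter (· ∣ u) = (Nat.gcd ℓ u).divisors := by
      ext t
      simp only [Finset.mem_filter, Nat.mem_divisors, Nat.dvd_gcd_iff]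
      constructor
      · rintro ⟨⟨h1, _⟩, h2⟩
        exact ⟨⟨h1, h2⟩, Nat.gcd_ne_zero_left hℓ.ne'⟩
      · rintro ⟨⟨h1, h2⟩, _⟩
        exact ⟨⟨h1, hℓ.ne'⟩, h2⟩
    rw [hset, sum_moebius_divisors]
    by_cases h : Nat.Coprime u ℓ
    · rw [if_pos h, if_pos (by rwa [Nat.gcd_comm])]
    · rw [if_neg h, if_neg (fun h1 => h (by rwa [Nat.gcd_comm] at h1))]
  have stepC : ∑ u ∈ Finset.range c, (if Nat.Coprime u ℓ then (1:ℂ) else 0) * f u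
      = ∑ t ∈ ℓ.divisors, ∑ u ∈ (Finset.range c).filter (fun u => t ∣ u),
          (ArithmeticFunction.moebius t : ℂ) * f u := by
    simp_rw [stepB, Finset.sum_mul]
    refine Finset.sum_comm' fun u t => ?_
    simp only [Finset.mem_filter]
    tauto
  rw [stepA, stepC]
  refine Finset.sum_congr rfl fun t ht => ?_
  obtain ⟨htℓ, hℓ0⟩ := Nat.mem_divisors.mp ht
  have htpos : 0 < t := Nat.pos_of_dvd_of_pos htℓ hℓ
  obtain ⟨q, hq⟩ := htℓ
  subst hq
  rw [Nat.mul_div_cancel_left q htpos]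
  rw [mul_assoc, Finset.mul_sum]
  congr 1
  rw [Finset.mul_sum]
  have hcc : c = t * (q * cs) := by rw [hc]; ring
  refine Finset.sum_nbij' (fun u => u / t) (fun v => t * v) ?_ ?_ ?_ ?_ ?_
  · intro u hu
    rw [Finset.mem_filter, Finset.mem_range] at hu
    obtain ⟨w, rfl⟩ := hu.2
    rw [Nat.mul_div_cancel_left _ htpos]
    refine Finset.mem_range.mpr ?_
    have h1 : t * w < t * (q * cs) := by rw [← hcc]; exact hu.1
    exact Nat.lt_of_mul_lt_mul_left h1
  · intro v hv
    rw [Finset.mem_range] at hv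
    rw [Finset.mem_filter, Finset.mem_range]
    constructor
    · rw [hcc]
      exact Nat.mul_lt_mul_left htpos |>.mpr hv
    · exact Dvd.intro v rfl
  · intro u hu
    rw [Finset.mem_filter] at hu
    exact Nat.mul_div_cancel' hu.2
  · intro v _
    exact Nat.mul_div_cancel_left v htpos
  · intro u hu
    rw [Finset.mem_filter] at hu
    obtain ⟨w, rfl⟩ := hu.2
    have hred : (t * w) / t = w := Nat.mul_div_cancel_left _ htpos
    have hχ : χs (((t * w : ℕ)) : ZMod cs) = χs ((t : ℕ) : ZMod cs) * χs ((w : ℕ) : ZMod cs) := by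
      push_cast
      exact map_mul χs _ _
    have hE : ((m : ℝ) * (t * w : ℕ) / (c : ℝ)) = (m : ℝ) * w / ((q * cs : ℕ) : ℝ) := by
      rw [hcc]
      have ht0 : (t : ℝ) ≠ 0 := Nat.cast_ne_zero.mpr htpos.ne'
      have hqcs : ((q * cs : ℕ) : ℝ) ≠ 0 := by
        have : 0 < q := by
          rcases Nat.eq_zero_or_pos q with h | h
          · subst h; simp at hℓ
          · exact h
        positivity
      push_cast at *
      field_simp
    show (ArithmeticFunction.moebius t : ℂ) * ((fun u => χs ((u : ℕ) : ZMod cs) * eC ((m : ℝ) * u / (c : ℝ))) (t * w)) = _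
    simp only [hred, hχ, hE]
    ring

lemma tau_eq (hprim : χs.IsPrimitive) :
    gSum χs cs 1 = gaussSum χs ZMod.stdAddChar := by
  rw [gSum, Finset.sum_filter]
  have h1 : ∀ u ∈ Finset.range cs,
      (if Nat.Coprime u cs then χs ((u : ℕ) : ZMod cs) * eC (((1:ℤ) : ℝ) * u / cs) else 0)
        = χs ((u : ℕ) : ZMod cs) * eC (((1:ℕ) : ℝ) * u / cs) := by
    intro u _
    by_cases h : Nat.Coprime u cs
    · rw [if_pos h]
      norm_num
    · rw [if_neg h]
      have hchi : χs ((u : ℕ) : ZMod cs) = 0 := by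
        apply MulChar.map_nonunit
        rw [ZMod.isUnit_iff_coprime]
        exact h
      rw [hchi, zero_mul]
  rw [Finset.sum_congr rfl h1, sum_range_eC_eval' χs hprim 1]
  have : χs ((1 : ℕ) : ZMod cs) = 1 := by
    rw [Nat.cast_one, map_one]
  rw [this, map_one, one_mul]

theorem main (hprim : χs.IsPrimitive) (m : ℕ) (hm : 0 < m) (s : ℂ) (hs : 1 < s.re) :
    Summable (fun ℓ : ℕ => gSum χs ((ℓ + 1) * cs) (m : ℤ) / ((ℓ + 1 : ℕ) : ℂ) ^ s) ∧
    gSum χs cs 1 *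
        ∑ d ∈ m.divisors, (starRingEnd ℂ) (χs ((d : ℕ) : ZMod cs)) * (d : ℂ) ^ (s - 1) =
      (m : ℂ) ^ (s - 1) *
        (∑' ℓ : ℕ, gSum χs ((ℓ + 1) * cs) (m : ℤ) / ((ℓ + 1 : ℕ) : ℂ) ^ s) *
        ∑' n : ℕ, χs ((n + 1 : ℕ) : ZMod cs) / ((n + 1 : ℕ) : ℂ) ^ s := by
  have hcs : 0 < cs := Nat.pos_of_ne_zero (NeZero.ne cs)
  set τ : ℂ := gaussSum χs ZMod.stdAddChar with hτ
  set A' : ArithmeticFunction ℂ :=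
    toArithmeticFunction (fun ℓ => gSum χs (ℓ * cs) (m : ℤ)) with hA'
  set Z' : ArithmeticFunction ℂ :=
    toArithmeticFunction (fun n => χs ((n : ℕ) : ZMod cs)) with hZ'
  set MU' : ArithmeticFunction ℂ :=
    toArithmeticFunction
      (fun t => (ArithmeticFunction.moebius t : ℂ) * χs ((t : ℕ) : ZMod cs)) with hMU'
  set HF' : ArithmeticFunction ℂ :=
    toArithmeticFunction
      (fun k => if k ∣ m then
          (k : ℂ) * ((starRingEnd ℂ) (χs ((m / k : ℕ) : ZMod cs)) * τ) else 0) with hHF'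
  have hAF : ∀ (f : ℕ → ℂ) (n : ℕ), n ≠ 0 → toArithmeticFunction f n = f n := by
    intro f n hn
    simp [toArithmeticFunction, hn]
  -- Key identity 1 : A' = MU' * HF'
  have K1 : A' = MU' * HF' := by
    ext n
    rcases Nat.eq_zero_or_pos n with rfl | hn
    · simp
    · rw [hAF _ n hn.ne', ArithmeticFunction.mul_apply,
        Nat.sum_divisorsAntidiagonal (fun a b => MU' a * HF' b)]
      have hgs : gSum χs (n * cs) (m : ℤ)
          = ∑ u ∈ (Finset.range (n * cs)).filter (fun u => Nat.Coprime u (n * cs)),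
              χs ((u : ℕ) : ZMod cs) * eC ((m : ℝ) * u / ((n * cs : ℕ) : ℝ)) := by
        rw [gSum]
        push_cast
        rfl
      rw [hgs, gSum_expand χs m hn]
      refine Finset.sum_congr rfl fun t ht => ?_
      obtain ⟨ht1, hn0⟩ := Nat.mem_divisors.mp ht
      have ht0 : t ≠ 0 := fun h => hn0 (by simpa [h] using ht1)
      have hnt0 : n / t ≠ 0 := (Nat.div_pos (Nat.le_of_dvd hn ht1) (Nat.pos_of_ne_zero ht0)).ne'
      rw [hAF _ t ht0, hAF _ (n / t) hnt0, Heval χs hprim (Nat.pos_of_ne_zero hnt0) m]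
  -- Key identity 2 : MU' * Z' = 1
  have K2 : MU' * Z' = 1 := by
    ext n
    rcases Nat.eq_zero_or_pos n with rfl | hn
    · simp
    · rw [ArithmeticFunction.mul_apply, Nat.sum_divisorsAntidiagonal (fun a b => MU' a * Z' b),
        ArithmeticFunction.one_apply]
      have : ∀ t ∈ n.divisors, MU' t * Z' (n / t)
          = (ArithmeticFunction.moebius t : ℂ) * χs ((n : ℕ) : ZMod cs) := by
        intro t ht
        obtain ⟨ht1, hn0⟩ := Nat.mem_divisors.mp ht
        have ht0 : t ≠ 0 := fun h => hn0 (by simpa [h] using ht1)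
        have hnt0 : n / t ≠ 0 := (Nat.div_pos (Nat.le_of_dvd hn ht1) (Nat.pos_of_ne_zero ht0)).ne'
        rw [hAF _ t ht0, hAF _ (n / t) hnt0]
        have : χs ((t : ℕ) : ZMod cs) * χs (((n / t : ℕ)) : ZMod cs) = χs ((n : ℕ) : ZMod cs) := by
          rw [← map_mul]
          congr 1
          rw [← Nat.cast_mul, Nat.mul_div_cancel' ht1]
        rw [mul_assoc, this]
      rw [Finset.sum_congr rfl this, ← Finset.sum_mul, sum_moebius_divisors]
      split
      · next h => subst h; simp
      · simp
  -- Summability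
  have hMUsum : LSeriesSummable (↗MU') s := by
    refine LSeriesSummable_of_bounded_of_one_lt_re (m := 1) (fun n hn => ?_) hs
    rw [hAF _ n hn]
    rw [norm_mul]
    have h1 : ‖((ArithmeticFunction.moebius n : ℤ) : ℂ)‖ ≤ 1 := by
      rw [Complex.norm_intCast]
      exact_mod_cast ArithmeticFunction.abs_moebius_le_one
    have h2 : ‖χs ((n : ℕ) : ZMod cs)‖ ≤ 1 := χs.norm_le_one _
    calc ‖_‖ * ‖_‖ ≤ 1 * 1 := by
          exact mul_le_mul h1 h2 (norm_nonneg _) zero_le_one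
      _ = 1 := one_mul 1
  have hZsum : LSeriesSummable (↗Z') s := by
    refine LSeriesSummable_of_bounded_of_one_lt_re (m := 1) (fun n hn => ?_) hs
    rw [hAF _ n hn]
    exact χs.norm_le_one _
  have hHFsum : LSeriesSummable (↗HF') s := by
    refine LSeriesSummable_of_bounded_of_one_lt_re (m := (m : ℝ) * ‖τ‖)
      (fun n hn => ?_) hs
    rw [hAF _ n hn]
    split
    · next h =>
        rw [norm_mul, norm_mul, Complex.norm_natCast]
        have h1 : (n : ℝ) ≤ (m : ℝ) := Nat.cast_le.mpr (Nat.le_of_dvd hm h)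
        have h2 : ‖(starRingEnd ℂ) (χs ((m / n : ℕ) : ZMod cs))‖ ≤ 1 := by
          rw [Complex.norm_conj]
          exact χs.norm_le_one _
        calc (n : ℝ) * (‖_‖ * ‖τ‖)
            ≤ (m : ℝ) * (1 * ‖τ‖) := by
              apply mul_le_mul h1 _ (by positivity) (by positivity)
              exact mul_le_mul_of_nonneg_right h2 (norm_nonneg _)
          _ = (m : ℝ) * ‖τ‖ := by ring
    · next h =>
        rw [norm_zero]
        positivity
  have hAsum : LSeriesSummable (↗A') s := by
    rw [K1]
    have h := (hMUsum.LSeriesHasSum.convolution hHFsum.LSeriesHasSum).summable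
    rwa [ArithmeticFunction.coe_mul] at h
  -- L-series identities
  have hAZ : LSeries (↗A') s * LSeries (↗Z') s = LSeries (↗HF') s := by
    rw [← ArithmeticFunction.LSeries_mul' hAsum hZsum]
    congr 1
    rw [K1, mul_right_comm, K2, one_mul]
  have hHFL : LSeries (↗HF') s
      = ∑ k ∈ m.divisors,
          ((k:ℂ) * ((starRingEnd ℂ) (χs ((m / k : ℕ) : ZMod cs)) * τ)) / (k:ℂ) ^ s := by
    rw [LSeries]
    rw [tsum_eq_sum (s := m.divisors) ?_]
    · refine Finset.sum_congr rfl fun k hk => ?_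
      obtain ⟨hk1, hm0⟩ := Nat.mem_divisors.mp hk
      have hk0 : k ≠ 0 := fun h => hm0 (by simpa [h] using hk1)
      rw [LSeries.term_of_ne_zero hk0, hAF _ k hk0, if_pos hk1]
    · intro b hb
      rcases Nat.eq_zero_or_pos b with rfl | hb0
      · exact LSeries.term_zero _ _
      · rw [LSeries.term_of_ne_zero hb0.ne', hAF _ b hb0.ne', if_neg, zero_div]
        intro hdvd
        exact hb (Nat.mem_divisors.mpr ⟨hdvd, hm.ne'⟩)
  -- identify statement tsums
  have hTA : (∑' ℓ : ℕ, gSum χs ((ℓ + 1) * cs) (m : ℤ) / ((ℓ + 1 : ℕ) : ℂ) ^ s)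
      = LSeries (↗A') s := by
    rw [LSeries, Summable.tsum_eq_zero_add hAsum, LSeries.term_zero, zero_add]
    refine tsum_congr fun n => ?_
    rw [LSeries.term_of_ne_zero (Nat.succ_ne_zero n), hAF _ _ (Nat.succ_ne_zero n)]
  have hTZ : (∑' n : ℕ, χs ((n + 1 : ℕ) : ZMod cs) / ((n + 1 : ℕ) : ℂ) ^ s)
      = LSeries (↗Z') s := by
    rw [LSeries, Summable.tsum_eq_zero_add hZsum, LSeries.term_zero, zero_add]
    refine tsum_congr fun n => ?_
    rw [LSeries.term_of_ne_zero (Nat.succ_ne_zero n), hAF _ _ (Nat.succ_ne_zero n)]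
  constructor
  · refine Summable.congr (f := fun ℓ : ℕ => LSeries.term (↗A') s (ℓ + 1))
      (hAsum.comp_injective (add_left_injective 1)) fun ℓ => ?_
    show LSeries.term (↗A') s (ℓ + 1) = gSum χs ((ℓ + 1) * cs) (m : ℤ) / ((ℓ + 1 : ℕ) : ℂ) ^ s
    rw [LSeries.term_of_ne_zero (Nat.succ_ne_zero ℓ), hAF _ _ (Nat.succ_ne_zero ℓ)]
  · rw [tau_eq χs hprim, hTA, hTZ, mul_assoc, hAZ, hHFL]
    rw [← Nat.sum_div_divisors m
      (fun d => (starRingEnd ℂ) (χs ((d : ℕ) : ZMod cs)) * (d : ℂ) ^ (s - 1))]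
    rw [Finset.mul_sum, Finset.mul_sum]
    refine Finset.sum_congr rfl fun k hk => ?_
    obtain ⟨hk1, _⟩ := Nat.mem_divisors.mp hk
    have hk0 : k ≠ 0 := fun h => hm.ne' (by simpa [h] using hk1)
    have hkC : (k : ℂ) ≠ 0 := Nat.cast_ne_zero.mpr hk0
    have hsplit : (m : ℂ) ^ (s - 1) = (k : ℂ) ^ (s - 1) * ((m / k : ℕ) : ℂ) ^ (s - 1) := by
      rw [show ((m : ℕ) : ℂ) = ((k : ℕ) : ℂ) * ((m / k : ℕ) : ℂ) by
        rw [← Nat.cast_mul, Nat.mul_div_cancel' hk1]]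
      exact Complex.natCast_mul_natCast_cpow k (m / k) (s - 1)
    have hkspow : (k : ℂ) ^ s ≠ 0 := by
      rw [Ne, Complex.cpow_eq_zero_iff]
      tauto
    rw [hsplit, Complex.cpow_sub _ _ hkC, Complex.cpow_one]
    field_simp
    ring

end

/-- The generating Dirichlet series `I(s,χ*,c*,m) = ∑_{ℓ≥1} g(χ*, ℓc*, m) ℓ^{-s}` of
non-primitive Gauss sums converges absolutely for `Re(s) > 1` and satisfies
`τ(χ*) σ_{s-1}(m, conj χ*) = m^{s-1} I(s,χ*,c*,m) L(s,χ*)`. -/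
theorem gauss_sum_generating_series {cs : ℕ} (hcs : 0 < cs)
    (χs : DirichletCharacter ℂ cs) (hprim : χs.IsPrimitive)
    (m : ℕ) (hm : 0 < m) (s : ℂ) (hs : 1 < s.re) :
    Summable (fun ℓ : ℕ => gSum χs ((ℓ + 1) * cs) (m : ℤ) / ((ℓ + 1 : ℕ) : ℂ) ^ s) ∧
    gSum χs cs 1 *
        ∑ d ∈ m.divisors, (starRingEnd ℂ) (χs ((d : ℕ) : ZMod cs)) * (d : ℂ) ^ (s - 1) =
      (m : ℂ) ^ (s - 1) *
        (∑' ℓ : ℕ, gSum χs ((ℓ + 1) * cs) (m : ℤ) / ((ℓ + 1 : ℕ) : ℂ) ^ s) *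
        ∑' n : ℕ, χs ((n + 1 : ℕ) : ZMod cs) / ((n + 1 : ℕ) : ℂ) ^ s := by
  haveI : NeZero cs := ⟨hcs.ne'⟩
  exact main χs hprim m hm s hs
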